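/- Let γ ∈ (0,1) and assume (2T/δ)·sup|∂â/∂s| ≤ 1−γ, where δ := (1−d(T))/(1−d). Define E_γ(x,t) := exp(−γ g(x,t)(d−x)²/(4εt)). Then for all t ∈ (0,T] and all x ∈ (0,1) with x ≠ d: (𝓛E_γ)(x,t) ≥ γ g(x,t) E_γ(x,t)/(2t) ≥ γ δ² E_γ(x,t)/(2T) > 0. -/

import Mathlib

/-- The coefficient `g(x,t)`: `(d(t)/d)²` for `x < d` and `((1-d(t))/(1-d))²` for `x > d`. -/
noncomputable def gfun (d : ℝ) (dd : ℝ → ℝ) (x t : ℝ) : ℝ :=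
  if x < d then (dd t / d) ^ 2 else ((1 - dd t) / (1 - d)) ^ 2

/-- The change of variables: `s(x,t) = (d(t)/d)x` for `x ≤ d` and
`s(x,t) = 1 - ((1-d(t))/(1-d))(1-x)` for `x ≥ d`. -/
noncomputable def smap (d : ℝ) (dd : ℝ → ℝ) (x t : ℝ) : ℝ :=
  if x ≤ d then (dd t / d) * x else 1 - ((1 - dd t) / (1 - d)) * (1 - x)

/-- `ψ_d(x) = (d-x)/d` for `x < d` and `(x-d)/(1-d)` for `x > d`. -/
noncomputable def psid (d x : ℝ) : ℝ :=
  if x < d then (d - x) / d else (x - d) / (1 - d)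

/-- `κ(x,t) = sqrt(g(x,t)) (a(x,t) + a(d,t)(ψ_d(x) - 1))`, where
`a(x,t) = â(s(x,t),t)` and `a(d,t) = â(d(t),t)`. -/
noncomputable def kappa (ahat : ℝ → ℝ → ℝ) (d : ℝ) (dd : ℝ → ℝ) (x t : ℝ) : ℝ :=
  Real.sqrt (gfun d dd x t) *
    (ahat (smap d dd x t) t + ahat (dd t) t * (psid d x - 1))

/-- The transformed operator `(𝓛F)(x,t) = -ε F_xx + κ F_x + g F_t`. -/
noncomputable def LL (ε : ℝ) (ahat : ℝ → ℝ → ℝ) (d : ℝ) (dd : ℝ → ℝ)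
    (F : ℝ → ℝ → ℝ) (x t : ℝ) : ℝ :=
  -ε * iteratedDeriv 2 (fun x' => F x' t) x
    + kappa ahat d dd x t * deriv (fun x' => F x' t) x
    + gfun d dd x t * deriv (fun t' => F x t') t

/-- The sup of `|∂â/∂s|` over `[0,1] × [0,T]`. -/
noncomputable def supAbsDs (f : ℝ → ℝ → ℝ) (T : ℝ) : ℝ :=
  sSup ((fun p : ℝ × ℝ => |deriv (fun s' => f s' p.2) p.1|) ''
    (Set.Icc 0 1 ×ˢ Set.Icc 0 T))

/-- The layer function `E_γ(x,t) = exp(-γ g(x,t)(d-x)²/(4εt))`. -/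
noncomputable def Egam (γ ε d : ℝ) (dd : ℝ → ℝ) (x t : ℝ) : ℝ :=
  Real.exp (-(γ * gfun d dd x t * (d - x) ^ 2) / (4 * ε * t))

section aux

lemma lip_aux (ahat : ℝ → ℝ → ℝ) (T : ℝ) (hT : 0 < T)
    (haC1 : ContDiffOn ℝ 1 (fun p : ℝ × ℝ => ahat p.1 p.2) (Set.Icc 0 1 ×ˢ Set.Icc 0 T)) :
    0 ≤ supAbsDs ahat T ∧
    ∀ t ∈ Set.Icc (0:ℝ) T, ∀ s1 ∈ Set.Ioo (0:ℝ) 1, ∀ s2 ∈ Set.Ioo (0:ℝ) 1,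
      |ahat s1 t - ahat s2 t| ≤ supAbsDs ahat T * |s1 - s2| := by
  set F : ℝ × ℝ → ℝ := fun p => ahat p.1 p.2 with hF
  set K : Set (ℝ × ℝ) := Set.Icc 0 1 ×ˢ Set.Icc 0 T with hKdef
  have hK : IsCompact K := isCompact_Icc.prod isCompact_Icc
  have hU : UniqueDiffOn ℝ K := (uniqueDiffOn_Icc one_pos).prod (uniqueDiffOn_Icc hT)
  have hcont := haC1.continuousOn_fderivWithin hU le_rfl
  obtain ⟨C, hC⟩ := hK.exists_bound_of_continuousOn hcont
  have h00 : ((0:ℝ), (0:ℝ)) ∈ K := ⟨⟨le_rfl, zero_le_one⟩, ⟨le_rfl, hT.le⟩⟩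
  have hC0 : 0 ≤ C := le_trans (norm_nonneg _) (hC (0, 0) h00)
  have hslice : ∀ s ∈ Set.Icc (0:ℝ) 1, ∀ t ∈ Set.Icc (0:ℝ) T,
      HasDerivWithinAt (fun s' => ahat s' t) (fderivWithin ℝ F K (s, t) (1, 0)) (Set.Icc 0 1) s := by
    intro s hs t ht
    have hFd : HasFDerivWithinAt F (fderivWithin ℝ F K (s, t)) K (s, t) :=
      (haC1.differentiableOn one_ne_zero (s, t) ⟨hs, ht⟩).hasFDerivWithinAt
    have hι : HasDerivWithinAt (fun s' : ℝ => (s', t)) ((1:ℝ), (0:ℝ)) (Set.Icc 0 1) s :=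
      ((hasDerivAt_id s).prodMk (hasDerivAt_const s t)).hasDerivWithinAt
    exact hFd.comp_hasDerivWithinAt s hι (fun s' hs' => (⟨hs', ht⟩ : (s', t) ∈ K))
  have hnorm10 : ‖((1:ℝ), (0:ℝ))‖ = 1 := by
    simp [Prod.norm_def]
  have hfd_bound : ∀ p ∈ K, |fderivWithin ℝ F K p (1, 0)| ≤ C := by
    intro p hp
    calc |fderivWithin ℝ F K p (1, 0)| ≤ ‖fderivWithin ℝ F K p‖ * ‖((1:ℝ), (0:ℝ))‖ :=
          (fderivWithin ℝ F K p).le_opNorm _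
      _ ≤ C := by rw [hnorm10, mul_one]; exact hC p hp
  have hb : ∀ t ∈ Set.Icc (0:ℝ) T, ∀ s ∈ Set.Icc (0:ℝ) 1,
      |deriv (fun s' => ahat s' t) s| ≤ C := by
    intro t ht s hs
    by_cases hdiff : DifferentiableAt ℝ (fun s' => ahat s' t) s
    · rw [← hdiff.derivWithin ((uniqueDiffOn_Icc one_pos) s hs),
        (hslice s hs t ht).derivWithin ((uniqueDiffOn_Icc one_pos) s hs)]
      exact hfd_bound (s, t) ⟨hs, ht⟩
    · rw [deriv_zero_of_not_differentiableAt hdiff]; simpa using hC0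
  have hbdd : BddAbove ((fun p : ℝ × ℝ => |deriv (fun s' => ahat s' p.2) p.1|) '' K) := by
    refine ⟨C, ?_⟩
    rintro _ ⟨⟨s, t⟩, ⟨hs, ht⟩, rfl⟩
    exact hb t ht s hs
  have hmem : ∀ t ∈ Set.Icc (0:ℝ) T, ∀ s ∈ Set.Icc (0:ℝ) 1,
      |deriv (fun s' => ahat s' t) s| ≤ supAbsDs ahat T := by
    intro t ht s hs
    exact le_csSup hbdd ⟨(s, t), ⟨hs, ht⟩, rfl⟩
  have hM0 : 0 ≤ supAbsDs ahat T :=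
    le_trans (abs_nonneg _) (hmem 0 ⟨le_rfl, hT.le⟩ 0 ⟨le_rfl, zero_le_one⟩)
  refine ⟨hM0, ?_⟩
  intro t ht s1 hs1 s2 hs2
  have hderivAt : ∀ s ∈ Set.Ioo (0:ℝ) 1, HasDerivWithinAt (fun s' => ahat s' t)
      (deriv (fun s' => ahat s' t) s) (Set.Ioo 0 1) s := by
    intro s hs
    have h1 := (hslice s (Set.Ioo_subset_Icc_self hs) t ht).mono Set.Ioo_subset_Icc_self
    have h2 : HasDerivAt (fun s' => ahat s' t) _ s := h1.hasDerivAt (Ioo_mem_nhds hs.1 hs.2)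
    exact h2.deriv ▸ h2.hasDerivWithinAt
  have := Convex.norm_image_sub_le_of_norm_hasDerivWithin_le hderivAt
    (fun s hs => hmem t ht s (Set.Ioo_subset_Icc_self hs)) (convex_Ioo 0 1) hs2 hs1
  simpa [Real.norm_eq_abs] using this

lemma model_hasDerivAt (c d x : ℝ) :
    HasDerivAt (fun x' => Real.exp (c * (d - x') ^ 2))
      ((-2 * c * (d - x)) * Real.exp (c * (d - x) ^ 2)) x := by
  have h1 : HasDerivAt (fun x' : ℝ => c * (d - x') ^ 2) (c * (2 * (d - x) ^ 1 * -1)) x :=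
    (((hasDerivAt_id x).const_sub d).pow 2).const_mul c
  have := h1.exp
  convert this using 1
  ring

lemma model_deriv (c d x : ℝ) :
    deriv (fun x' => Real.exp (c * (d - x') ^ 2)) x
      = (-2 * c * (d - x)) * Real.exp (c * (d - x) ^ 2) :=
  (model_hasDerivAt c d x).deriv

lemma model_deriv2 (c d x : ℝ) :
    deriv (deriv (fun x' => Real.exp (c * (d - x') ^ 2))) x
      = (2 * c + 4 * c ^ 2 * (d - x) ^ 2) * Real.exp (c * (d - x) ^ 2) := by
  have hfun : deriv (fun x' => Real.exp (c * (d - x') ^ 2))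
      = fun x' => (-2 * c * (d - x')) * Real.exp (c * (d - x') ^ 2) := by
    funext y; exact model_deriv c d y
  rw [hfun]
  have h1 : HasDerivAt (fun x' : ℝ => -2 * c * (d - x')) (2 * c) x := by
    have := ((hasDerivAt_id x).const_sub d).const_mul (-2 * c)
    exact this.congr_deriv (by ring)
  have h2 := h1.mul (model_hasDerivAt c d x)
  rw [show (fun x' => -2 * c * (d - x') * Real.exp (c * (d - x') ^ 2)) = (fun x' => -2 * c * (d - x')) * (fun x' => Real.exp (c * (d - x') ^ 2)) from rfl, h2.deriv]
  ring

lemma bracket_nonneg (γ t M G r d x as AD : ℝ) (ht : 0 < t) (hγ1 : γ < 1)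
    (hr : 0 ≤ r) (hG : G = r ^ 2) (hM0 : 0 ≤ M)
    (hlipv : |as - AD| ≤ M * (r * |x - d|)) (hMt : 2 * t * M ≤ 1 - γ) :
    0 ≤ (1 - γ) * G * (d - x) ^ 2 / t + 2 * r * (d - x) * (as - AD) := by
  subst hG
  have h0 : |2 * r * (d - x) * (as - AD)| ≤ 2 * M * r ^ 2 * (d - x) ^ 2 := by
    rw [abs_mul]
    have e1 : |2 * r * (d - x)| = 2 * r * |d - x| := by
      rw [abs_mul]; rw [abs_of_nonneg (by linarith : (0:ℝ) ≤ 2 * r)]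
    rw [e1]
    calc 2 * r * |d - x| * |as - AD| ≤ 2 * r * |d - x| * (M * (r * |x - d|)) := by
          apply mul_le_mul_of_nonneg_left hlipv
          positivity
      _ = 2 * M * r ^ 2 * (d - x) ^ 2 := by
          rw [abs_sub_comm x d, ← sq_abs (d - x)]; ring
  have hnn : 0 ≤ ((1 - γ) - 2 * t * M) * r ^ 2 * (d - x) ^ 2 / t :=
    div_nonneg (mul_nonneg (mul_nonneg (by linarith) (sq_nonneg r)) (sq_nonneg _)) ht.le
  have hid : (1 - γ) * r ^ 2 * (d - x) ^ 2 / t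
      = ((1 - γ) - 2 * t * M) * r ^ 2 * (d - x) ^ 2 / t + 2 * M * r ^ 2 * (d - x) ^ 2 := by
    field_simp; ring
  have hneg := neg_abs_le (2 * r * (d - x) * (as - AD))
  rw [hid]
  linarith [h0]

set_option maxHeartbeats 1600000 in
lemma LL_alg1 (ε t γ d x p as AD E : ℝ) (hε : ε ≠ 0) (ht : t ≠ 0) (hd : d ≠ 0) :
    -ε * ((2 * (-(γ * (p / d) ^ 2) / (4 * ε * t))
        + 4 * (-(γ * (p / d) ^ 2) / (4 * ε * t)) ^ 2 * (d - x) ^ 2) * E)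
      + p / d * (as + AD * ((d - x) / d - 1)) *
        (-2 * (-(γ * (p / d) ^ 2) / (4 * ε * t)) * (d - x) * E)
      + (p / d) ^ 2 *
        (E * ((-(γ * (2 * (p / d) * (AD / d)) * (d - x) ^ 2) * (4 * ε * t)
          - -(γ * (p / d) ^ 2 * (d - x) ^ 2) * (4 * ε)) / (4 * ε * t) ^ 2))
    = γ * (p / d) ^ 2 * E / (2 * t)
      + γ * (p / d) ^ 2 * E / (4 * ε * t) *
        ((1 - γ) * (p / d) ^ 2 * (d - x) ^ 2 / t
          + 2 * (p / d) * (d - x) * (as - AD)) := by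
  field_simp
  ring

set_option maxHeartbeats 1600000 in
lemma LL_alg2 (ε t γ d x p as AD E : ℝ) (hε : ε ≠ 0) (ht : t ≠ 0) (hd : (1:ℝ) - d ≠ 0) :
    -ε * ((2 * (-(γ * ((1 - p) / (1 - d)) ^ 2) / (4 * ε * t))
        + 4 * (-(γ * ((1 - p) / (1 - d)) ^ 2) / (4 * ε * t)) ^ 2 * (d - x) ^ 2) * E)
      + (1 - p) / (1 - d) * (as + AD * ((x - d) / (1 - d) - 1)) *
        (-2 * (-(γ * ((1 - p) / (1 - d)) ^ 2) / (4 * ε * t)) * (d - x) * E)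
      + ((1 - p) / (1 - d)) ^ 2 *
        (E * ((-(γ * (2 * ((1 - p) / (1 - d)) * (-AD / (1 - d))) * (d - x) ^ 2) * (4 * ε * t)
          - -(γ * ((1 - p) / (1 - d)) ^ 2 * (d - x) ^ 2) * (4 * ε)) / (4 * ε * t) ^ 2))
    = γ * ((1 - p) / (1 - d)) ^ 2 * E / (2 * t)
      + γ * ((1 - p) / (1 - d)) ^ 2 * E / (4 * ε * t) *
        ((1 - γ) * ((1 - p) / (1 - d)) ^ 2 * (d - x) ^ 2 / t
          + 2 * ((1 - p) / (1 - d)) * (d - x) * (as - AD)) := by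
  field_simp
  ring

end aux

set_option maxHeartbeats 1600000 in
/-- under assumption `(2T/δ)·sup|∂â/∂s| ≤ 1 - γ` with `γ ∈ (0,1)` and
`δ = (1-d(T))/(1-d)`, for all `t ∈ (0,T]` and `x ∈ (0,1)` with `x ≠ d`:
`(𝓛E_γ)(x,t) ≥ γ g(x,t) E_γ(x,t)/(2t) ≥ γ δ² E_γ(x,t)/(2T) > 0`. -/
theorem stmt_13
    (ε T d α : ℝ) (hε : 0 < ε) (hT : 0 < T) (hd : d ∈ Set.Ioo (0 : ℝ) 1) (hα : 0 < α)
    (ahat : ℝ → ℝ → ℝ)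
    (haC1 : ContDiffOn ℝ 1 (fun p : ℝ × ℝ => ahat p.1 p.2)
      (Set.Icc 0 1 ×ˢ Set.Icc 0 T))
    (haα : ∀ s ∈ Set.Icc (0 : ℝ) 1, ∀ t ∈ Set.Icc (0 : ℝ) T, α ≤ ahat s t)
    (dd : ℝ → ℝ)
    (hddODE : ∀ t ∈ Set.Icc (0 : ℝ) T, HasDerivAt dd (ahat (dd t) t) t)
    (hdd0 : dd 0 = d)
    (hddQ : ∀ t ∈ Set.Icc (0 : ℝ) T, dd t ∈ Set.Ioo (0 : ℝ) 1)
    (hddT : dd T < 1)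
    (γ : ℝ) (hγ : γ ∈ Set.Ioo (0 : ℝ) 1)
    (hconstraint :
      (2 * T / ((1 - dd T) / (1 - d))) * supAbsDs ahat T ≤ 1 - γ) :
    ∀ t ∈ Set.Ioc (0 : ℝ) T, ∀ x ∈ Set.Ioo (0 : ℝ) 1, x ≠ d →
      γ * gfun d dd x t * Egam γ ε d dd x t / (2 * t)
        ≤ LL ε ahat d dd (Egam γ ε d dd) x t ∧
      γ * ((1 - dd T) / (1 - d)) ^ 2 * Egam γ ε d dd x t / (2 * T)
        ≤ γ * gfun d dd x t * Egam γ ε d dd x t / (2 * t) ∧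
      0 < γ * ((1 - dd T) / (1 - d)) ^ 2 * Egam γ ε d dd x t / (2 * T) := by
  obtain ⟨hM0, hlip⟩ := lip_aux ahat T hT haC1
  set M := supAbsDs ahat T with hMdef
  intro t htI0 x hxI hxne
  have ht0 : 0 < t := htI0.1
  have htT : t ≤ T := htI0.2
  have htI : t ∈ Set.Icc 0 T := ⟨ht0.le, htT⟩
  have hd0 : 0 < d := hd.1
  have hd1 : d < 1 := hd.2
  have hp01 := hddQ t htI
  have hp0 : 0 < dd t := hp01.1
  have hp1 : dd t < 1 := hp01.2
  -- monotonicity of dd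
  have hcontdd : ContinuousOn dd (Set.Icc 0 T) :=
    fun s hs => ((hddODE s hs).continuousAt.continuousWithinAt)
  have hmono : MonotoneOn dd (Set.Icc 0 T) := by
    apply (strictMonoOn_of_deriv_pos (convex_Icc 0 T) hcontdd ?_).monotoneOn
    intro s hs
    rw [interior_Icc] at hs
    have hsI : s ∈ Set.Icc 0 T := Set.Ioo_subset_Icc_self hs
    rw [(hddODE s hsI).deriv]
    have := haα (dd s) (Set.Ioo_subset_Icc_self (hddQ s hsI)) s hsI
    linarith
  have hdle : d ≤ dd t := by
    rw [← hdd0]; exact hmono ⟨le_rfl, hT.le⟩ htI ht0.le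
  have hdTle : dd t ≤ dd T := hmono htI ⟨hT.le, le_rfl⟩ htT
  have hdT : d ≤ dd T := le_trans hdle hdTle
  set δ := (1 - dd T) / (1 - d) with hδdef
  have hδpos : 0 < δ := div_pos (by linarith) (by linarith)
  have hδ1 : δ ≤ 1 := by
    rw [hδdef, div_le_one (by linarith : (0:ℝ) < 1 - d)]; linarith
  have hMt : 2 * t * M ≤ 1 - γ := by
    have h1 : 2 * T ≤ 2 * T / δ := by
      rw [le_div_iff₀ hδpos]; nlinarith
    calc 2 * t * M ≤ 2 * T * M := by nlinarith
      _ ≤ (2 * T / δ) * M := by nlinarith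
      _ ≤ 1 - γ := hconstraint
  have hEpos : 0 < Egam γ ε d dd x t := Real.exp_pos _
  -- the δ² ≤ g bound
  have hGδ : δ ^ 2 ≤ gfun d dd x t := by
    by_cases hxd : x < d
    · rw [gfun, if_pos hxd]
      have h1 : δ ≤ dd t / d := le_trans hδ1 ((le_div_iff₀ hd0).mpr (by linarith))
      exact pow_le_pow_left₀ hδpos.le h1 2
    · rw [gfun, if_neg hxd]
      have h1 : δ ≤ (1 - dd t) / (1 - d) := by
        rw [hδdef]
        exact div_le_div_of_nonneg_right (by linarith) (by linarith)
      exact pow_le_pow_left₀ hδpos.le h1 2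
  have hGpos : 0 < gfun d dd x t := lt_of_lt_of_le (pow_pos hδpos 2) hGδ
  have hsecond : γ * δ ^ 2 * Egam γ ε d dd x t / (2 * T)
      ≤ γ * gfun d dd x t * Egam γ ε d dd x t / (2 * t) := by
    calc γ * δ ^ 2 * Egam γ ε d dd x t / (2 * T)
        ≤ γ * δ ^ 2 * Egam γ ε d dd x t / (2 * t) := by
          exact div_le_div_of_nonneg_left
            (mul_nonneg (mul_nonneg hγ.1.le (sq_nonneg δ)) hEpos.le) (by linarith) (by linarith)
      _ ≤ γ * gfun d dd x t * Egam γ ε d dd x t / (2 * t) := by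
          apply (div_le_div_iff_of_pos_right (by linarith : (0:ℝ) < 2 * t)).mpr
          exact mul_le_mul_of_nonneg_right (mul_le_mul_of_nonneg_left hGδ hγ.1.le) hEpos.le
  have hthird : 0 < γ * δ ^ 2 * Egam γ ε d dd x t / (2 * T) :=
    div_pos (mul_pos (mul_pos hγ.1 (pow_pos hδpos 2)) hEpos) (by linarith)
  refine ⟨?_, hsecond, hthird⟩
  have hεne : (4:ℝ) * ε * t ≠ 0 := by positivity
  by_cases hxd : x < d
  · -- case x < d
    have hGval : gfun d dd x t = (dd t / d) ^ 2 := by rw [gfun, if_pos hxd]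
    have hr0 : (0:ℝ) < dd t / d := div_pos hp0 hd0
    have hsqrt : Real.sqrt (gfun d dd x t) = dd t / d := by
      rw [hGval]; exact Real.sqrt_sq hr0.le
    have hkap : kappa ahat d dd x t
        = (dd t / d) * (ahat ((dd t / d) * x) t + ahat (dd t) t * ((d - x) / d - 1)) := by
      rw [kappa, hsqrt]
      simp only [smap, psid, if_pos hxd.le, if_pos hxd]
    set c : ℝ := -(γ * (dd t / d) ^ 2) / (4 * ε * t) with hcdef
    have hev : (fun x' => Egam γ ε d dd x' t) =ᶠ[nhds x]
        (fun x' => Real.exp (c * (d - x') ^ 2)) := by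
      filter_upwards [Iio_mem_nhds hxd] with y hy
      rw [Set.mem_Iio] at hy
      simp only [Egam, gfun, if_pos hy, hcdef]
      congr 1
      ring
    have hE : Egam γ ε d dd x t = Real.exp (c * (d - x) ^ 2) := hev.eq_of_nhds
    have hDx : deriv (fun x' => Egam γ ε d dd x' t) x
        = (-2 * c * (d - x)) * Real.exp (c * (d - x) ^ 2) := by
      rw [hev.deriv_eq]; exact model_deriv c d x
    have hDxx : iteratedDeriv 2 (fun x' => Egam γ ε d dd x' t) x
        = (2 * c + 4 * c ^ 2 * (d - x) ^ 2) * Real.exp (c * (d - x) ^ 2) := by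
      have h2 : iteratedDeriv 2 (fun x' => Egam γ ε d dd x' t) x
          = deriv (deriv (fun x' => Egam γ ε d dd x' t)) x := by
        rw [show (2:ℕ) = 1 + 1 from rfl, iteratedDeriv_succ, iteratedDeriv_one]
      rw [h2, (hev.deriv).deriv_eq]
      exact model_deriv2 c d x
    -- time derivative
    have hfunt : (fun t' => Egam γ ε d dd x t')
        = fun t' => Real.exp (-(γ * (dd t' / d) ^ 2 * (d - x) ^ 2) / (4 * ε * t')) := by
      funext τ; simp only [Egam, gfun, if_pos hxd]
    have hnum : HasDerivAt (fun t' => -(γ * (dd t' / d) ^ 2 * (d - x) ^ 2))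
        (-(γ * (2 * (dd t / d) * (ahat (dd t) t / d)) * (d - x) ^ 2)) t := by
      have h1 := (hddODE t htI).div_const d
      have h2 := (((h1.pow 2).const_mul γ).mul_const ((d - x) ^ 2)).neg
      refine h2.congr_deriv ?_
      push_cast
      ring
    have hden : HasDerivAt (fun t' : ℝ => 4 * ε * t') (4 * ε) t := by
      simpa using (hasDerivAt_id t).const_mul (4 * ε)
    have hu := (hnum.div hden hεne).exp
    have hDt : deriv (fun t' => Egam γ ε d dd x t') t
        = Real.exp (-(γ * (dd t / d) ^ 2 * (d - x) ^ 2) / (4 * ε * t)) *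
          ((-(γ * (2 * (dd t / d) * (ahat (dd t) t / d)) * (d - x) ^ 2) * (4 * ε * t)
            - -(γ * (dd t / d) ^ 2 * (d - x) ^ 2) * (4 * ε)) / (4 * ε * t) ^ 2) := by
      rw [hfunt]; exact hu.deriv
    have hexpe : Real.exp (-(γ * (dd t / d) ^ 2 * (d - x) ^ 2) / (4 * ε * t))
        = Real.exp (c * (d - x) ^ 2) := by
      rw [hcdef]; congr 1; ring
    have hLLval : LL ε ahat d dd (Egam γ ε d dd) x t
        = γ * (dd t / d) ^ 2 * Real.exp (c * (d - x) ^ 2) / (2 * t)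
          + (γ * (dd t / d) ^ 2 * Real.exp (c * (d - x) ^ 2) / (4 * ε * t)) *
            ((1 - γ) * (dd t / d) ^ 2 * (d - x) ^ 2 / t
              + 2 * (dd t / d) * (d - x) * (ahat ((dd t / d) * x) t - ahat (dd t) t)) := by
      rw [LL, hDx, hDxx, hDt, hkap, hGval, hexpe, hcdef]
      exact LL_alg1 ε t γ d x (dd t) _ _ _ hε.ne' ht0.ne' hd0.ne'
    -- Lipschitz bound
    have hs1 : (dd t / d) * x ∈ Set.Ioo (0:ℝ) 1 := by
      constructor
      · exact mul_pos hr0 hxI.1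
      · have h3 : (dd t / d) * x < (dd t / d) * d := by
          exact mul_lt_mul_of_pos_left hxd hr0
        rw [div_mul_cancel₀ _ hd0.ne'] at h3
        linarith
    have hlipv : |ahat ((dd t / d) * x) t - ahat (dd t) t|
        ≤ M * ((dd t / d) * |x - d|) := by
      have h4 := hlip t htI _ hs1 _ hp01
      have h5 : (dd t / d) * x - dd t = (dd t / d) * (x - d) := by
        field_simp
      rw [h5, abs_mul, abs_of_pos hr0] at h4
      linarith [h4]
    have hbr := bracket_nonneg γ t M ((dd t / d) ^ 2) (dd t / d) d x
      (ahat ((dd t / d) * x) t) (ahat (dd t) t) ht0 hγ.2 hr0.le rfl hM0 hlipv hMt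
    rw [hGval, hE, hLLval]
    have hBpos : 0 ≤ γ * (dd t / d) ^ 2 * Real.exp (c * (d - x) ^ 2) / (4 * ε * t) :=
      div_nonneg (mul_nonneg (mul_nonneg hγ.1.le (sq_nonneg _)) (Real.exp_pos _).le)
        (by positivity)
    have hfin := mul_nonneg hBpos hbr
    linarith
  · -- case x > d
    have hxd2 : d < x := lt_of_le_of_ne (not_lt.mp hxd) (Ne.symm hxne)
    have h1d : (0:ℝ) < 1 - d := by linarith
    have hr0 : (0:ℝ) < (1 - dd t) / (1 - d) := div_pos (by linarith) h1d
    have hGval : gfun d dd x t = ((1 - dd t) / (1 - d)) ^ 2 := by rw [gfun, if_neg hxd]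
    have hsqrt : Real.sqrt (gfun d dd x t) = (1 - dd t) / (1 - d) := by
      rw [hGval]; exact Real.sqrt_sq hr0.le
    have hkap : kappa ahat d dd x t
        = ((1 - dd t) / (1 - d)) * (ahat (1 - ((1 - dd t) / (1 - d)) * (1 - x)) t
          + ahat (dd t) t * ((x - d) / (1 - d) - 1)) := by
      rw [kappa, hsqrt]
      simp only [smap, psid, if_neg (not_le.mpr hxd2), if_neg hxd]
    set c : ℝ := -(γ * ((1 - dd t) / (1 - d)) ^ 2) / (4 * ε * t) with hcdef
    have hev : (fun x' => Egam γ ε d dd x' t) =ᶠ[nhds x]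
        (fun x' => Real.exp (c * (d - x') ^ 2)) := by
      filter_upwards [Ioi_mem_nhds hxd2] with y hy
      rw [Set.mem_Ioi] at hy
      simp only [Egam, gfun, if_neg (not_lt.mpr hy.le), hcdef]
      congr 1
      ring
    have hE : Egam γ ε d dd x t = Real.exp (c * (d - x) ^ 2) := hev.eq_of_nhds
    have hDx : deriv (fun x' => Egam γ ε d dd x' t) x
        = (-2 * c * (d - x)) * Real.exp (c * (d - x) ^ 2) := by
      rw [hev.deriv_eq]; exact model_deriv c d x
    have hDxx : iteratedDeriv 2 (fun x' => Egam γ ε d dd x' t) x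
        = (2 * c + 4 * c ^ 2 * (d - x) ^ 2) * Real.exp (c * (d - x) ^ 2) := by
      have h2 : iteratedDeriv 2 (fun x' => Egam γ ε d dd x' t) x
          = deriv (deriv (fun x' => Egam γ ε d dd x' t)) x := by
        rw [show (2:ℕ) = 1 + 1 from rfl, iteratedDeriv_succ, iteratedDeriv_one]
      rw [h2, (hev.deriv).deriv_eq]
      exact model_deriv2 c d x
    have hfunt : (fun t' => Egam γ ε d dd x t')
        = fun t' => Real.exp (-(γ * ((1 - dd t') / (1 - d)) ^ 2 * (d - x) ^ 2) / (4 * ε * t')) := by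
      funext τ; simp only [Egam, gfun, if_neg hxd]
    have hnum : HasDerivAt (fun t' => -(γ * ((1 - dd t') / (1 - d)) ^ 2 * (d - x) ^ 2))
        (-(γ * (2 * ((1 - dd t) / (1 - d)) * (-(ahat (dd t) t) / (1 - d))) * (d - x) ^ 2)) t := by
      have h1 := ((hddODE t htI).const_sub 1).div_const (1 - d)
      have h2 := (((h1.pow 2).const_mul γ).mul_const ((d - x) ^ 2)).neg
      refine h2.congr_deriv ?_
      push_cast
      ring
    have hden : HasDerivAt (fun t' : ℝ => 4 * ε * t') (4 * ε) t := by
      simpa using (hasDerivAt_id t).const_mul (4 * ε)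
    have hu := (hnum.div hden hεne).exp
    have hDt : deriv (fun t' => Egam γ ε d dd x t') t
        = Real.exp (-(γ * ((1 - dd t) / (1 - d)) ^ 2 * (d - x) ^ 2) / (4 * ε * t)) *
          ((-(γ * (2 * ((1 - dd t) / (1 - d)) * (-(ahat (dd t) t) / (1 - d))) * (d - x) ^ 2) * (4 * ε * t)
            - -(γ * ((1 - dd t) / (1 - d)) ^ 2 * (d - x) ^ 2) * (4 * ε)) / (4 * ε * t) ^ 2) := by
      rw [hfunt]; exact hu.deriv
    have hexpe : Real.exp (-(γ * ((1 - dd t) / (1 - d)) ^ 2 * (d - x) ^ 2) / (4 * ε * t))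
        = Real.exp (c * (d - x) ^ 2) := by
      rw [hcdef]; congr 1; ring
    have hLLval : LL ε ahat d dd (Egam γ ε d dd) x t
        = γ * ((1 - dd t) / (1 - d)) ^ 2 * Real.exp (c * (d - x) ^ 2) / (2 * t)
          + (γ * ((1 - dd t) / (1 - d)) ^ 2 * Real.exp (c * (d - x) ^ 2) / (4 * ε * t)) *
            ((1 - γ) * ((1 - dd t) / (1 - d)) ^ 2 * (d - x) ^ 2 / t
              + 2 * ((1 - dd t) / (1 - d)) * (d - x) *
                (ahat (1 - ((1 - dd t) / (1 - d)) * (1 - x)) t - ahat (dd t) t)) := by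
      rw [LL, hDx, hDxx, hDt, hkap, hGval, hexpe, hcdef]
      exact LL_alg2 ε t γ d x (dd t) _ _ _ hε.ne' ht0.ne' h1d.ne'
    have hs1 : 1 - ((1 - dd t) / (1 - d)) * (1 - x) ∈ Set.Ioo (0:ℝ) 1 := by
      constructor
      · have hid2 : 1 - (1 - dd t) / (1 - d) * (1 - x)
            = dd t + (1 - dd t) / (1 - d) * (x - d) := by
          field_simp
          ring
        rw [hid2]
        have := mul_pos hr0 (sub_pos.mpr hxd2)
        linarith
      · have := mul_pos hr0 (by linarith [hxI.2] : (0:ℝ) < 1 - x)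
        linarith
    have hlipv : |ahat (1 - ((1 - dd t) / (1 - d)) * (1 - x)) t - ahat (dd t) t|
        ≤ M * (((1 - dd t) / (1 - d)) * |x - d|) := by
      have h4 := hlip t htI _ hs1 _ hp01
      have h5 : 1 - (1 - dd t) / (1 - d) * (1 - x) - dd t
          = ((1 - dd t) / (1 - d)) * (x - d) := by
        field_simp
        ring
      rw [h5, abs_mul, abs_of_pos hr0] at h4
      linarith [h4]
    have hbr := bracket_nonneg γ t M (((1 - dd t) / (1 - d)) ^ 2) ((1 - dd t) / (1 - d)) d x
      (ahat (1 - ((1 - dd t) / (1 - d)) * (1 - x)) t) (ahat (dd t) t)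
      ht0 hγ.2 hr0.le rfl hM0 hlipv hMt
    rw [hGval, hE, hLLval]
    have hBpos : 0 ≤ γ * ((1 - dd t) / (1 - d)) ^ 2 * Real.exp (c * (d - x) ^ 2) / (4 * ε * t) :=
      div_nonneg (mul_nonneg (mul_nonneg hγ.1.le (sq_nonneg _)) (Real.exp_pos _).le)
        (by positivity)
    have hfin := mul_nonneg hBpos hbr
    linarith
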